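/- Let X be a set and c : X → X → ℝ a cost function satisfying, for all x, y, z ∈ X: c(x,y) ≥ 0, c(x,y) = c(y,x), and c(x,z) ≤ c(x,y) + c(y,z). Fix an integer k ≥ 1, weighted k-tuples (x,π), (y,ρ), (z,ν), and define f((x,π),(y,ρ),σ) := (1/k) · ∑_i c(x i, y (σ i)) + Real.arccos( ∑_i √(π i · ρ (σ i)) ) for a permutation σ of Fin k. Then for all permutations σ and τ of Fin k, f((x,π),(z,ν),σ) + f((z,ν),(y,ρ),τ) ≥ f((x,π),(y,ρ), τ ∘ σ); that is, the composition of two matchings yields a matching whose cost does not exceed the sum of the two costs. -/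

import Mathlib

open scoped BigOperators

lemma arccos_antitone : Antitone Real.arccos := fun a b h => by
  unfold Real.arccos; linarith [Real.monotone_arcsin h]

/-- Spherical triangle inequality for unit vectors in a real inner product space. -/
lemma arccos_inner_triangle {E : Type*} [NormedAddCommGroup E] [InnerProductSpace ℝ E]
    (u v w : E) (hu : ‖u‖ = 1) (hv : ‖v‖ = 1) (hw : ‖w‖ = 1) :
    Real.arccos (inner ℝ u w) ≤ Real.arccos (inner ℝ u v) + Real.arccos (inner ℝ v w) := by
  set B : ℝ := inner ℝ u v with hB
  set C : ℝ := inner ℝ v w with hC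
  set A : ℝ := inner ℝ u w with hA
  have hB1 : |B| ≤ 1 := by
    have := abs_real_inner_le_norm u v; rwa [hu, hv, one_mul] at this
  have hC1 : |C| ≤ 1 := by
    have := abs_real_inner_le_norm v w; rwa [hv, hw, one_mul] at this
  -- key inequality: A ≥ B*C - √(1-B²)·√(1-C²)
  have hvu : (inner ℝ v u : ℝ) = B := (real_inner_comm u v).trans hB.symm
  have hwv : (inner ℝ w v : ℝ) = C := (real_inner_comm v w).trans hC.symm
  have hwu : (inner ℝ w u : ℝ) = A := (real_inner_comm u w).trans hA.symm
  have hsB : (starRingEnd ℝ) B = B := by simp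
  have hsC : (starRingEnd ℝ) C = C := by simp
  have hnuv : ‖u - B • v‖ ^ 2 = 1 - B ^ 2 := by
    rw [← real_inner_self_eq_norm_sq]
    simp only [inner_sub_sub_self, inner_smul_left, inner_smul_right, real_inner_self_eq_norm_sq,
      hu, hv, hvu, hsB, ← hB]
    ring
  have hnwv : ‖w - C • v‖ ^ 2 = 1 - C ^ 2 := by
    rw [← real_inner_self_eq_norm_sq]
    simp only [inner_sub_sub_self, inner_smul_left, inner_smul_right, real_inner_self_eq_norm_sq,
      hw, hv, real_inner_comm v w, hsC, ← hC]
    ring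
  have hinner : (inner ℝ (u - B • v) (w - C • v) : ℝ) = A - B * C := by
    simp only [inner_sub_sub_self, inner_sub_left, inner_sub_right, inner_smul_left,
      inner_smul_right, real_inner_self_eq_norm_sq, hv, hvu, hwv, hwu, hsB, hsC,
      ← hA, ← hB, ← hC]
    ring
  have hCS : |A - B * C| ≤ Real.sqrt (1 - B ^ 2) * Real.sqrt (1 - C ^ 2) := by
    have h1 : ‖u - B • v‖ = Real.sqrt (1 - B ^ 2) := by
      rw [← hnuv, Real.sqrt_sq (norm_nonneg _)]
    have h2 : ‖w - C • v‖ = Real.sqrt (1 - C ^ 2) := by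
      rw [← hnwv, Real.sqrt_sq (norm_nonneg _)]
    calc |A - B * C| = |(inner ℝ (u - B • v) (w - C • v) : ℝ)| := by rw [hinner]
      _ ≤ ‖u - B • v‖ * ‖w - C • v‖ := abs_real_inner_le_norm _ _
      _ = _ := by rw [h1, h2]
  have hkey : B * C - Real.sqrt (1 - B ^ 2) * Real.sqrt (1 - C ^ 2) ≤ A := by
    have := neg_abs_le (A - B * C)
    linarith [abs_le.mp hCS |>.1]
  -- now split on whether arccos B + arccos C ≥ π
  rcases le_or_gt Real.pi (Real.arccos B + Real.arccos C) with h | h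
  · exact (Real.arccos_le_pi A).trans h
  · have hsum0 : 0 ≤ Real.arccos B + Real.arccos C :=
      add_nonneg (Real.arccos_nonneg _) (Real.arccos_nonneg _)
    have hcos : Real.cos (Real.arccos B + Real.arccos C)
        = B * C - Real.sqrt (1 - B ^ 2) * Real.sqrt (1 - C ^ 2) := by
      rw [Real.cos_add, Real.cos_arccos (neg_le_of_abs_le hB1) (le_of_abs_le hB1),
        Real.cos_arccos (neg_le_of_abs_le hC1) (le_of_abs_le hC1),
        Real.sin_arccos, Real.sin_arccos]
    calc Real.arccos A ≤ Real.arccos (Real.cos (Real.arccos B + Real.arccos C)) :=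
          arccos_antitone (hcos ▸ hkey)
      _ = Real.arccos B + Real.arccos C := Real.arccos_cos hsum0 h.le

/-- The cost of matching the weighted `k`-tuple `(x, w₁)` to `(y, w₂)` through the
permutation (matching) `σ`:
`(1/k) · ∑ i, c (x i) (y (σ i)) + arccos (∑ i, √(w₁ i · w₂ (σ i)))`. -/
noncomputable def matchCost {X : Type*} (c : X → X → ℝ) {k : ℕ}
    (x : Fin k → X) (w₁ : Fin k → ℝ) (y : Fin k → X) (w₂ : Fin k → ℝ)
    (σ : Equiv.Perm (Fin k)) : ℝ :=
  (1 / (k : ℝ)) * ∑ i, c (x i) (y (σ i)) +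
    Real.arccos (∑ i, Real.sqrt (w₁ i * w₂ (σ i)))

/-- **Composition of matchings** (key step in the proof of Theorem 1): if the cost
`c` is nonnegative, symmetric, and satisfies the triangle inequality, then for any
permutations `σ, τ`, the cost of the composed matching `τ ∘ σ` between `(x,w₁)` and
`(y,w₂)` is at most the cost of `σ` from `(x,w₁)` to `(z,w₃)` plus the cost of `τ`
from `(z,w₃)` to `(y,w₂)`. -/
theorem matchCost_comp_le {X : Type*} (c : X → X → ℝ)
    (hc_nonneg : ∀ x y, 0 ≤ c x y)
    (hc_symm : ∀ x y, c x y = c y x)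
    (hc_tri : ∀ x y z, c x z ≤ c x y + c y z)
    (k : ℕ) (hk : 1 ≤ k)
    (x y z : Fin k → X) (w₁ w₂ w₃ : Fin k → ℝ)
    (hw₁ : ∀ i, 0 ≤ w₁ i) (hw₁s : ∑ i, w₁ i = 1)
    (hw₂ : ∀ i, 0 ≤ w₂ i) (hw₂s : ∑ i, w₂ i = 1)
    (hw₃ : ∀ i, 0 ≤ w₃ i) (hw₃s : ∑ i, w₃ i = 1)
    (σ τ : Equiv.Perm (Fin k)) :
    matchCost c x w₁ y w₂ (σ.trans τ) ≤
      matchCost c x w₁ z w₃ σ + matchCost c z w₃ y w₂ τ := by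
  unfold matchCost
  have hkpos : (0 : ℝ) < k := by exact_mod_cast hk
  -- transport part
  have htrans : (1 / (k : ℝ)) * ∑ i, c (x i) (y ((σ.trans τ) i)) ≤
      (1 / (k : ℝ)) * ∑ i, c (x i) (z (σ i)) + (1 / (k : ℝ)) * ∑ i, c (z i) (y (τ i)) := by
    rw [← mul_add]
    apply mul_le_mul_of_nonneg_left _ (by positivity)
    have hre : ∑ i, c (z i) (y (τ i)) = ∑ i, c (z (σ i)) (y (τ (σ i))) :=
      (Equiv.sum_comp σ (fun j => c (z j) (y (τ j)))).symm
    rw [hre, ← Finset.sum_add_distrib]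
    exact Finset.sum_le_sum fun i _ => hc_tri (x i) (z (σ i)) (y (τ (σ i)))
  -- angular part
  have hang : Real.arccos (∑ i, Real.sqrt (w₁ i * w₂ ((σ.trans τ) i))) ≤
      Real.arccos (∑ i, Real.sqrt (w₁ i * w₃ (σ i))) +
        Real.arccos (∑ i, Real.sqrt (w₃ i * w₂ (τ i))) := by
    let u : EuclideanSpace ℝ (Fin k) := WithLp.toLp 2 (fun i => Real.sqrt (w₁ i))
    let v : EuclideanSpace ℝ (Fin k) := WithLp.toLp 2 (fun i => Real.sqrt (w₃ (σ i)))
    let w : EuclideanSpace ℝ (Fin k) := WithLp.toLp 2 (fun i => Real.sqrt (w₂ (τ (σ i))))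
    have norm_of (f : Fin k → ℝ) (hf : ∀ i, 0 ≤ f i) (hfs : ∑ i, f i = 1)
        (g : EuclideanSpace ℝ (Fin k)) (hg : ∀ i, g i = Real.sqrt (f i)) : ‖g‖ = 1 := by
      have : ‖g‖ ^ 2 = 1 := by
        rw [← real_inner_self_eq_norm_sq, PiLp.inner_apply]
        simp only [RCLike.inner_apply, conj_trivial, hg]
        rw [← hfs]
        exact Finset.sum_congr rfl fun i _ => Real.mul_self_sqrt (hf i)
      nlinarith [norm_nonneg g]
    have hu : ‖u‖ = 1 := norm_of w₁ hw₁ hw₁s u fun i => rfl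
    have hv : ‖v‖ = 1 := by
      refine norm_of (fun i => w₃ (σ i)) (fun i => hw₃ _) ?_ v fun i => rfl
      exact Equiv.sum_comp σ w₃ |>.trans hw₃s
    have hw : ‖w‖ = 1 := by
      refine norm_of (fun i => w₂ (τ (σ i))) (fun i => hw₂ _) ?_ w fun i => rfl
      exact Equiv.sum_comp (σ.trans τ) w₂ |>.trans hw₂s
    have main := arccos_inner_triangle u v w hu hv hw
    have e1 : (inner ℝ u w : ℝ) = ∑ i, Real.sqrt (w₁ i * w₂ ((σ.trans τ) i)) := by
      rw [PiLp.inner_apply]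
      exact Finset.sum_congr rfl fun i _ => by
        simp [u, w, ← Real.sqrt_mul (hw₁ i)]
        rw [mul_comm]; exact (Real.sqrt_mul (hw₁ i) _).symm
    have e2 : (inner ℝ u v : ℝ) = ∑ i, Real.sqrt (w₁ i * w₃ (σ i)) := by
      rw [PiLp.inner_apply]
      exact Finset.sum_congr rfl fun i _ => by
        simp [u, v, ← Real.sqrt_mul (hw₁ i)]
        rw [mul_comm]; exact (Real.sqrt_mul (hw₁ i) _).symm
    have e3 : (inner ℝ v w : ℝ) = ∑ i, Real.sqrt (w₃ i * w₂ (τ i)) := by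
      rw [PiLp.inner_apply]
      rw [← Equiv.sum_comp σ (fun j => Real.sqrt (w₃ j * w₂ (τ j)))]
      exact Finset.sum_congr rfl fun i _ => by
        simp [v, w, ← Real.sqrt_mul (hw₃ (σ i))]
        rw [mul_comm]; exact (Real.sqrt_mul (hw₃ (σ i)) _).symm
    rw [e1, e2, e3] at main
    exact main
  linarith
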